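/- Let V be a nontrivial variety of Heyting algebras containing the Heyting algebra 2²⊕1 (the four-element Boolean algebra with a new top adjoined), and let F be the free Heyting algebra for V of denumerable rank. Then the four-element Heyting algebra 2² does not embed into F. -/

import Mathlib

/-- A bundled Heyting algebra. -/
structure HAlg where
  carrier : Type
  [str : HeytingAlgebra carrier]

attribute [instance] HAlg.str

/-- Direct product of a family of Heyting algebras. -/
def HAlg.pi {I : Type} (A : I → HAlg) : HAlg := ⟨∀ i, (A i).carrier⟩

/-- A class of Heyting algebras is a variety if it is closed under homomorphic images,
subalgebras (injective Heyting homomorphisms) and direct products. -/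
def IsHVariety (V : Set HAlg) : Prop :=
  (∀ A ∈ V, ∀ B : HAlg, ∀ f : HeytingHom A.carrier B.carrier,
      Function.Surjective f → B ∈ V) ∧
  (∀ A : HAlg, ∀ B ∈ V, ∀ f : HeytingHom A.carrier B.carrier,
      Function.Injective f → A ∈ V) ∧
  (∀ (I : Type) (A : I → HAlg), (∀ i, A i ∈ V) → HAlg.pi A ∈ V)

/-! The five-element Heyting algebra `2² ⊕ 1`: the four-element Boolean algebra
`{o, a, b, c}` (with atoms `a`, `b` and `c = a ∨ b`) with a new top `i` adjoined. -/

inductive L5 | o | a | b | c | i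
deriving DecidableEq

instance : Fintype L5 where
  elems := {.o, .a, .b, .c, .i}
  complete := fun x => by cases x <;> simp

namespace L5

def leB : L5 → L5 → Bool
  | .o, _ => true
  | _, .i => true
  | .a, .a => true
  | .a, .c => true
  | .b, .b => true
  | .b, .c => true
  | .c, .c => true
  | _, _ => false

def supF : L5 → L5 → L5
  | .o, x => x
  | x, .o => x
  | .i, _ => .i
  | _, .i => .i
  | .a, .a => .a
  | .b, .b => .b
  | _, _ => .c

def infF : L5 → L5 → L5
  | .i, x => x
  | x, .i => x
  | .o, _ => .o
  | _, .o => .o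
  | .a, .b => .o
  | .b, .a => .o
  | .a, _ => .a
  | _, .a => .a
  | .b, _ => .b
  | _, .b => .b
  | _, _ => .c

instance : PartialOrder L5 where
  le x y := leB x y = true
  le_refl := (by decide : ∀ x : L5, leB x x = true)
  le_trans := (by decide : ∀ x y z : L5, leB x y = true → leB y z = true → leB x z = true)
  le_antisymm := (by decide : ∀ x y : L5, leB x y = true → leB y x = true → x = y)

instance : Lattice L5 where
  sup := supF
  le_sup_left := (by decide : ∀ x y : L5, leB x (supF x y) = true)
  le_sup_right := (by decide : ∀ x y : L5, leB y (supF x y) = true)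
  sup_le := (by decide : ∀ x y z : L5, leB x z = true → leB y z = true → leB (supF x y) z = true)
  inf := infF
  inf_le_left := (by decide : ∀ x y : L5, leB (infF x y) x = true)
  inf_le_right := (by decide : ∀ x y : L5, leB (infF x y) y = true)
  le_inf := (by decide : ∀ x y z : L5, leB x y = true → leB x z = true → leB x (infF y z) = true)

instance : OrderTop L5 where
  top := .i
  le_top := (by decide : ∀ x : L5, leB x .i = true)

instance : OrderBot L5 where
  bot := .o
  bot_le := (by decide : ∀ x : L5, leB .o x = true)

/-- Heyting implication: the largest `z` with `z ⊓ x ≤ y`. -/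
def himpF (x y : L5) : L5 :=
  (([.o, .a, .b, .c, .i] : List L5).filter fun z => leB (infF z x) y).foldr supF .o

instance : HeytingAlgebra L5 where
  himp := himpF
  le_himp_iff := (by decide : ∀ x y z : L5, leB x (himpF y z) = true ↔ leB (infF x y) z = true)
  compl x := himpF x .o
  himp_bot := fun _ => rfl

end L5

/-- The Heyting algebra `2² ⊕ 1` as an object. -/
def L5alg : HAlg := ⟨L5⟩

/-- The four-element Heyting algebra `2²`. -/
noncomputable def TwoSq : HAlg := ⟨Bool × Bool⟩

/-- `F` is free for `V` of denumerable rank (free generators `x 0, x 1, …`). -/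
def IsFreeHeyting (V : Set HAlg) (F : HAlg) (x : ℕ → F.carrier) : Prop :=
  F ∈ V ∧ ∀ A ∈ V, ∀ g : ℕ → A.carrier,
    ∃! h : HeytingHom F.carrier A.carrier, ∀ n, h (x n) = g n

/-! ### Auxiliary results for the proof -/

/-- Every nonzero element of a Heyting algebra is sent to `true` by some
Heyting homomorphism to `Bool` (take a maximal proper filter containing it). -/
lemma exists_heytingHom_bool {H : Type} [HeytingAlgebra H] {u : H} (hu : u ≠ ⊥) :
    ∃ φ : HeytingHom H Bool, φ u = true := by
  classical
  set S : Set (Set H) :=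
    {M | u ∈ M ∧ ⊥ ∉ M ∧ (∀ a ∈ M, ∀ b, a ≤ b → b ∈ M) ∧ ∀ a ∈ M, ∀ b ∈ M, a ⊓ b ∈ M} with hS
  have hUp : Set.Ici u ∈ S :=
    ⟨le_refl u, fun h => hu (le_bot_iff.mp h), fun a ha b hab => le_trans ha hab,
      fun a ha b hb => le_inf ha hb⟩
  have hchainub : ∀ c ⊆ S, IsChain (· ⊆ ·) c → c.Nonempty → ∃ ub ∈ S, ∀ s ∈ c, s ⊆ ub := by
    intro c hcS hchain hcne
    obtain ⟨s₀, hs₀⟩ := hcne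
    refine ⟨⋃₀ c, ⟨⟨s₀, hs₀, (hcS hs₀).1⟩, ?_, ?_, ?_⟩, fun s hs => Set.subset_sUnion_of_mem hs⟩
    · rintro ⟨s, hs, hbot⟩; exact (hcS hs).2.1 hbot
    · rintro a ⟨s, hs, has⟩ b hab; exact ⟨s, hs, (hcS hs).2.2.1 a has b hab⟩
    · rintro a ⟨s, hs, has⟩ b ⟨t, ht, hbt⟩
      rcases hchain.total hs ht with h | h
      · exact ⟨t, ht, (hcS ht).2.2.2 a (h has) b hbt⟩
      · exact ⟨s, hs, (hcS hs).2.2.2 a has b (h hbt)⟩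
  obtain ⟨M, -, hMmax⟩ := zorn_subset_nonempty S hchainub _ hUp
  obtain ⟨huM, hbotM, hup, hinf⟩ := hMmax.1
  -- key consequence of maximality
  have hkey : ∀ a : H, a ∉ M → ∃ m ∈ M, m ⊓ a = ⊥ := by
    intro a haM
    by_contra hcon
    push_neg at hcon
    set M' : Set H := {b | ∃ m ∈ M, m ⊓ a ≤ b} with hM'
    have hMM' : M ⊆ M' := fun m hm => ⟨m, hm, inf_le_left⟩
    have hM'S : M' ∈ S := by
      refine ⟨hMM' huM, ?_, ?_, ?_⟩
      · rintro ⟨m, hm, hle⟩; exact hcon m hm (le_bot_iff.mp hle)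
      · rintro b ⟨m, hm, hle⟩ b' hbb'; exact ⟨m, hm, hle.trans hbb'⟩
      · rintro b ⟨m, hm, hle⟩ b' ⟨m', hm', hle'⟩
        exact ⟨m ⊓ m', hinf m hm m' hm', by
          calc m ⊓ m' ⊓ a = (m ⊓ a) ⊓ (m' ⊓ a) := by ac_rfl
          _ ≤ b ⊓ b' := inf_le_inf hle hle'⟩
    exact haM (hMmax.2 hM'S hMM' ⟨u, huM, inf_le_right⟩)
  -- membership facts
  have hmem_inf : ∀ a b : H, a ⊓ b ∈ M ↔ a ∈ M ∧ b ∈ M := by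
    intro a b
    constructor
    · intro h; exact ⟨hup _ h _ inf_le_left, hup _ h _ inf_le_right⟩
    · rintro ⟨ha, hb⟩; exact hinf a ha b hb
  have hmem_sup : ∀ a b : H, a ⊔ b ∈ M ↔ a ∈ M ∨ b ∈ M := by
    intro a b
    constructor
    · intro h
      by_contra hcon
      push_neg at hcon
      obtain ⟨m, hm, hma⟩ := hkey a hcon.1
      obtain ⟨n, hn, hnb⟩ := hkey b hcon.2
      have : (m ⊓ n) ⊓ (a ⊔ b) = ⊥ := by
        rw [inf_sup_left]
        have h1 : m ⊓ n ⊓ a = ⊥ := by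
          rw [← le_bot_iff, ← hma]; exact inf_le_inf_right a inf_le_left
        have h2 : m ⊓ n ⊓ b = ⊥ := by
          rw [← le_bot_iff, ← hnb]; exact inf_le_inf_right b inf_le_right
        rw [h1, h2, sup_idem]
      exact hbotM (this ▸ hinf _ (hinf m hm n hn) _ h)
    · rintro (h | h)
      · exact hup _ h _ le_sup_left
      · exact hup _ h _ le_sup_right
  have hmem_himp : ∀ a b : H, a ⇨ b ∈ M ↔ (a ∈ M → b ∈ M) := by
    intro a b
    constructor
    · intro h ha
      have : (a ⇨ b) ⊓ a ≤ b := by rw [inf_comm]; exact inf_himp_le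
      exact hup _ (hinf _ h _ ha) _ this
    · intro h
      by_cases ha : a ∈ M
      · exact hup _ (h ha) _ le_himp
      · obtain ⟨m, hm, hma⟩ := hkey a ha
        exact hup _ hm _ (le_himp_iff.mpr (hma.le.trans bot_le))
  have bsup : ∀ a b : Bool, a ⊔ b = (a || b) := fun a b => rfl
  have binf : ∀ a b : Bool, a ⊓ b = (a && b) := fun a b => rfl
  have bhimp : ∀ a b : Bool, (a ⇨ b) = (!a || b) := by decide
  refine ⟨⟨⟨⟨fun a => decide (a ∈ M), ?_⟩, ?_⟩, ?_, ?_⟩, by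
    show decide (u ∈ M) = true; exact decide_eq_true huM⟩
  · intro a b
    by_cases ha : a ∈ M <;> by_cases hb : b ∈ M <;>
      simp [ha, hb, hmem_sup, bsup]
  · intro a b
    by_cases ha : a ∈ M <;> by_cases hb : b ∈ M <;>
      simp [ha, hb, hmem_inf, binf]
  · simp [hbotM]
  · intro a b
    by_cases ha : a ∈ M <;> by_cases hb : b ∈ M <;>
      simp [ha, hb, hmem_himp, bhimp]

/-- The collapsing function `2²⊕1 → 2²` identifying the two top elements. -/
def hcolF : L5 → Bool × Bool
  | .o => (false, false)
  | .a => (true, false)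
  | .b => (false, true)
  | .c => (true, true)
  | .i => (true, true)

/-- The collapsing map is a Heyting homomorphism. -/
def hcol : HeytingHom L5 (Bool × Bool) where
  toFun := hcolF
  map_sup' := by decide
  map_inf' := by decide
  map_bot' := by decide
  map_himp' := by decide

/-- A section of `hcol` sending the top of `2²` to the *new* top of `2²⊕1`. -/
def hsec : Bool × Bool → L5
  | (false, false) => .o
  | (true, false) => .a
  | (false, true) => .b
  | (true, true) => .i

lemma hcol_hsec : ∀ z : Bool × Bool, hcol (hsec z) = z := by decide

/-- Pairing of two Heyting homomorphisms. -/
def HeytingHom.prodPair {H A B : Type} [HeytingAlgebra H] [HeytingAlgebra A] [HeytingAlgebra B]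
    (φ : HeytingHom H A) (ψ : HeytingHom H B) : HeytingHom H (A × B) where
  toFun y := (φ y, ψ y)
  map_sup' a b := by simp [Prod.ext_iff]
  map_inf' a b := by simp [Prod.ext_iff]
  map_bot' := by simp [Prod.ext_iff]
  map_himp' a b := by simp [Prod.ext_iff]

/-- if `V` is a nontrivial variety of Heyting algebras containing
`2² ⊕ 1`, then the four-element Heyting algebra `2²` does not embed into the free
algebra `F` for `V` of denumerable rank. -/
theorem stmt16 (V : Set HAlg) (hV : IsHVariety V)
    (hnt : ∃ A ∈ V, Nontrivial A.carrier)
    (hL5 : L5alg ∈ V)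
    (F : HAlg) (x : ℕ → F.carrier) (hF : IsFreeHeyting V F x) :
    ¬ ∃ f : HeytingHom TwoSq.carrier F.carrier, Function.Injective f := by
  rintro ⟨f, hf⟩
  set u : F.carrier := f ((true, false) : Bool × Bool) with hu
  set v : F.carrier := f ((false, true) : Bool × Bool) with hv
  have hune : u ≠ ⊥ := by
    intro h
    have h2 : ((true, false) : Bool × Bool) = ((⊥ : Bool × Bool)) := by
      apply hf; exact h.trans (map_bot f).symm
    exact absurd h2 (by decide)
  have hvne : v ≠ ⊥ := by
    intro h
    have h2 : ((false, true) : Bool × Bool) = ((⊥ : Bool × Bool)) := by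
      apply hf; exact h.trans (map_bot f).symm
    exact absurd h2 (by decide)
  have hinfuv : u ⊓ v = ⊥ := by
    rw [hu, hv]; refine (map_inf f _ _).symm.trans ?_
    show f ((⊥ : Bool × Bool)) = ⊥
    exact map_bot f
  have hsupuv : u ⊔ v = ⊤ := by
    rw [hu, hv]; refine (map_sup f _ _).symm.trans ?_
    show f ((⊤ : Bool × Bool)) = ⊤
    exact map_top f
  obtain ⟨φ₁, hφ₁⟩ := exists_heytingHom_bool hune
  obtain ⟨φ₂, hφ₂⟩ := exists_heytingHom_bool hvne
  have hφ₁v : φ₁ v = false := by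
    have h1 : φ₁ u ⊓ φ₁ v = false := by
      rw [← map_inf, hinfuv, map_bot]; rfl
    rw [hφ₁] at h1
    cases hb : φ₁ v
    · rfl
    · rw [hb] at h1; exact absurd h1 (by decide)
  have hφ₂u : φ₂ u = false := by
    have h1 : φ₂ u ⊓ φ₂ v = false := by
      rw [← map_inf, hinfuv, map_bot]; rfl
    rw [hφ₂] at h1
    cases hb : φ₂ u
    · rfl
    · rw [hb] at h1; exact absurd h1 (by decide)
  set Φ : HeytingHom F.carrier (Bool × Bool) := HeytingHom.prodPair φ₁ φ₂ with hΦ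
  have hΦu : Φ u = ((true, false) : Bool × Bool) := by
    show (φ₁ u, φ₂ u) = _
    rw [hφ₁, hφ₂u]
  have hΦv : Φ v = ((false, true) : Bool × Bool) := by
    show (φ₁ v, φ₂ v) = _
    rw [hφ₂, hφ₁v]
  have hTwoSq : TwoSq ∈ V := hV.2.1 TwoSq F hF.1 f hf
  obtain ⟨Ψ, hΨ, -⟩ := hF.2 L5alg hL5 (fun n => hsec (Φ (x n)))
  obtain ⟨Θ, -, hΘuniq⟩ := hF.2 TwoSq hTwoSq (fun n => Φ (x n))
  have e1 : hcol.comp Ψ = Θ := by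
    apply hΘuniq
    intro n
    show hcol (Ψ (x n)) = Φ (x n)
    rw [hΨ n, hcol_hsec]
  have e2 : Φ = Θ := hΘuniq Φ (fun n => rfl)
  have hΦΨ : ∀ y : F.carrier, hcol (Ψ y) = Φ y := by
    intro y
    have := congrArg (fun (g : HeytingHom F.carrier (Bool × Bool)) => g y) (e1.trans e2.symm)
    exact this
  have hΨu : Ψ u = L5.a := by
    have h1 : hcol (Ψ u) = ((true, false) : Bool × Bool) := by rw [hΦΨ, hΦu]
    cases hc : Ψ u <;> rw [hc] at h1 <;> first | rfl | (exact absurd h1 (by decide))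
  have hΨv : Ψ v = L5.b := by
    have h1 : hcol (Ψ v) = ((false, true) : Bool × Bool) := by rw [hΦΨ, hΦv]
    cases hc : Ψ v <;> rw [hc] at h1 <;> first | rfl | (exact absurd h1 (by decide))
  have hfinal : Ψ (u ⊔ v) = Ψ u ⊔ Ψ v := map_sup Ψ u v
  rw [hsupuv, map_top, hΨu, hΨv] at hfinal
  have hfinal2 : (⊤ : L5) = L5.a ⊔ L5.b := hfinal
  exact absurd hfinal2 (by decide)
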